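/- Let H be a symmetric positive definite real n×n matrix and let ℓ : ℝⁿ → ℝ be convex and differentiable with L-Lipschitz gradient, L > 0. Then for all u₁, u₂ ∈ ℝⁿ, ⟨H⁻¹∇ℓ(u₁) − H⁻¹∇ℓ(u₂), u₁ − u₂⟩_H ≥ (λ_min(H)/L)·‖H⁻¹∇ℓ(u₁) − H⁻¹∇ℓ(u₂)‖²_H; that is, the map u ↦ H⁻¹∇ℓ(u) is (λ_min(H)/L)-cocoercive with respect to the inner product ⟨·,·⟩_H. -/

import Mathlib

open scoped RealInnerProductSpace
open Filter Topology

/-- The `H`-inner product `⟨u, v⟩_H = uᵀ H v` on `ℝⁿ`. -/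
noncomputable def hIP {n : ℕ} (H : Matrix (Fin n) (Fin n) ℝ)
    (u v : EuclideanSpace ℝ (Fin n)) : ℝ :=
  ⟪u, Matrix.toEuclideanLin H v⟫

/-- The `H`-norm `‖u‖_H = √(uᵀ H u)` on `ℝⁿ`. -/
noncomputable def hNorm {n : ℕ} (H : Matrix (Fin n) (Fin n) ℝ)
    (u : EuclideanSpace ℝ (Fin n)) : ℝ :=
  Real.sqrt (hIP H u u)

/-- The smallest eigenvalue `λ_min(H)` of a Hermitian matrix `H`. -/
noncomputable def lambdaMin {n : ℕ} (H : Matrix (Fin n) (Fin n) ℝ)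
    (hH : H.IsHermitian) : ℝ :=
  ⨅ i, hH.eigenvalues i

variable {E : Type*} [NormedAddCommGroup E] [InnerProductSpace ℝ E] [CompleteSpace E]

lemma gradLineDeriv (ℓ : E → ℝ) (hdiff : Differentiable ℝ ℓ) (x d : E) (t : ℝ) :
    HasDerivAt (fun s : ℝ => ℓ (x + s • d)) ⟪gradient ℓ (x + t • d), d⟫ t := by
  have h1 : HasFDerivAt ℓ ((InnerProductSpace.toDual ℝ E) (gradient ℓ (x + t • d))) (x + t • d) :=
    hasGradientAt_iff_hasFDerivAt.1 (hdiff _).hasGradientAt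
  have h2 : HasDerivAt (fun s : ℝ => x + s • d) d t := by
    simpa using ((hasDerivAt_id t).smul_const d).const_add x
  have h3 := h1.comp_hasDerivAt t h2
  exact h3

lemma tangent (ℓ : E → ℝ) (hconv : ConvexOn ℝ Set.univ ℓ) (hdiff : Differentiable ℝ ℓ)
    (x y : E) : ℓ x + ⟪gradient ℓ x, y - x⟫ ≤ ℓ y := by
  set d := y - x with hd
  set g : ℝ → ℝ := fun s => ℓ (x + s • d) with hg
  have hgconv : ConvexOn ℝ Set.univ g := by
    have := hconv.comp_affineMap (AffineMap.lineMap x y : ℝ →ᵃ[ℝ] E)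
    have heq : g = ℓ ∘ (AffineMap.lineMap x y : ℝ →ᵃ[ℝ] E) := by
      funext s
      simp [g, AffineMap.lineMap_apply, hd]
      congr 1
      module
    rw [heq]
    simpa using this
  have hder : HasDerivAt g ⟪gradient ℓ (x + (0:ℝ) • d), d⟫ 0 := gradLineDeriv ℓ hdiff x d 0
  have := hgconv.le_slope_of_hasDerivAt (Set.mem_univ (0:ℝ)) (Set.mem_univ (1:ℝ))
    zero_lt_one hder
  rw [slope_def_field] at this
  have h0 : g 0 = ℓ x := by simp [g]
  have h1 : g 1 = ℓ y := by simp [g, hd]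
  simp only [zero_smul, add_zero] at this
  rw [h0, h1] at this
  have : ⟪gradient ℓ x, d⟫ ≤ (ℓ y - ℓ x) / (1 - 0) := this
  simp at this
  linarith

lemma descent (ℓ : E → ℝ) (hdiff : Differentiable ℝ ℓ) (L : ℝ) (hL : 0 < L)
    (hLip : ∀ u v, ‖gradient ℓ u - gradient ℓ v‖ ≤ L * ‖u - v‖) (x y : E) :
    ℓ y ≤ ℓ x + ⟪gradient ℓ x, y - x⟫ + L / 2 * ‖y - x‖ ^ 2 := by
  set d := y - x with hd
  have hcont : Continuous (gradient ℓ) := by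
    have : LipschitzWith ⟨L, hL.le⟩ (gradient ℓ) := by
      apply LipschitzWith.of_dist_le_mul
      intro u v
      rw [dist_eq_norm, dist_eq_norm]
      exact hLip u v
    exact this.continuous
  set φ : ℝ → ℝ := fun t => ⟪gradient ℓ (x + t • d), d⟫ with hφ
  have hcφ : Continuous φ := by
    apply Continuous.inner
    · exact hcont.comp (by continuity)
    · exact continuous_const
  have heq : ∫ t in (0:ℝ)..1, φ t = ℓ (x + (1:ℝ) • d) - ℓ (x + (0:ℝ) • d) :=
    intervalIntegral.integral_eq_sub_of_hasDerivAt (f := fun s : ℝ => ℓ (x + s • d))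
      (fun t _ => gradLineDeriv ℓ hdiff x d t) (hcφ.intervalIntegrable 0 1)
  have h01 : x + (1:ℝ) • d = y := by simp [hd]
  have h00 : x + (0:ℝ) • d = x := by simp
  rw [h01, h00] at heq
  have hmono : ∫ t in (0:ℝ)..1, φ t ≤
      ∫ t in (0:ℝ)..1, (⟪gradient ℓ x, d⟫ + L * ‖d‖ ^ 2 * t) := by
    apply intervalIntegral.integral_mono_on zero_le_one (hcφ.intervalIntegrable 0 1)
      ((by continuity : Continuous fun t : ℝ => ⟪gradient ℓ x, d⟫ + L * ‖d‖ ^ 2 * t).intervalIntegrable 0 1)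
    intro t ht
    have hsub : φ t - ⟪gradient ℓ x, d⟫ = ⟪gradient ℓ (x + t • d) - gradient ℓ x, d⟫ := by
      rw [inner_sub_left]
    have hb : ⟪gradient ℓ (x + t • d) - gradient ℓ x, d⟫ ≤ L * ‖d‖ ^ 2 * t := by
      calc ⟪gradient ℓ (x + t • d) - gradient ℓ x, d⟫
          ≤ ‖gradient ℓ (x + t • d) - gradient ℓ x‖ * ‖d‖ := real_inner_le_norm _ _
        _ ≤ (L * ‖x + t • d - x‖) * ‖d‖ := by
            apply mul_le_mul_of_nonneg_right (hLip _ _) (norm_nonneg _)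
        _ = L * ‖d‖ ^ 2 * t := by
            have : x + t • d - x = t • d := by abel
            rw [this, norm_smul, Real.norm_eq_abs, abs_of_nonneg ht.1]
            ring
    linarith
  have hval : ∫ t in (0:ℝ)..1, (⟪gradient ℓ x, d⟫ + L * ‖d‖ ^ 2 * t)
      = ⟪gradient ℓ x, d⟫ + L / 2 * ‖d‖ ^ 2 := by
    rw [intervalIntegral.integral_add (f := fun _ => ⟪gradient ℓ x, d⟫) (g := fun t => L * ‖d‖ ^ 2 * t) (intervalIntegrable_const)
      (((continuous_const.mul continuous_id') :
        Continuous fun t : ℝ => L * ‖d‖ ^ 2 * t).intervalIntegrable 0 1),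
      intervalIntegral.integral_const, intervalIntegral.integral_const_mul, integral_id]
    norm_num
    ring
  rw [hval] at hmono
  rw [heq] at hmono
  linarith

lemma lowerBound (ℓ : E → ℝ) (hconv : ConvexOn ℝ Set.univ ℓ) (hdiff : Differentiable ℝ ℓ)
    (L : ℝ) (hL : 0 < L)
    (hLip : ∀ u v, ‖gradient ℓ u - gradient ℓ v‖ ≤ L * ‖u - v‖) (x y : E) :
    ℓ x + ⟪gradient ℓ x, y - x⟫ + 1 / (2 * L) * ‖gradient ℓ y - gradient ℓ x‖ ^ 2 ≤ ℓ y := by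
  set Δ := gradient ℓ y - gradient ℓ x with hΔ
  set z := y - (1 / L) • Δ with hz
  have h1 : ℓ x + ⟪gradient ℓ x, z - x⟫ ≤ ℓ z := tangent ℓ hconv hdiff x z
  have h2 : ℓ z ≤ ℓ y + ⟪gradient ℓ y, z - y⟫ + L / 2 * ‖z - y‖ ^ 2 :=
    descent ℓ hdiff L hL hLip y z
  have hzy : z - y = -((1 / L) • Δ) := by rw [hz]; abel
  have hzx : z - x = (y - x) - (1 / L) • Δ := by rw [hz]; abel
  have e1 : ⟪gradient ℓ y, z - y⟫ = -(1 / L) * ⟪gradient ℓ y, Δ⟫ := by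
    rw [hzy, inner_neg_right, real_inner_smul_right]; ring
  have e2 : ‖z - y‖ ^ 2 = (1 / L) ^ 2 * ‖Δ‖ ^ 2 := by
    rw [hzy, norm_neg, norm_smul, Real.norm_eq_abs, abs_of_nonneg (by positivity)]
    ring
  have e3 : ⟪gradient ℓ x, z - x⟫ = ⟪gradient ℓ x, y - x⟫ - (1 / L) * ⟪gradient ℓ x, Δ⟫ := by
    rw [hzx, inner_sub_right, real_inner_smul_right]
  have e4 : ⟪gradient ℓ y, Δ⟫ - ⟪gradient ℓ x, Δ⟫ = ‖Δ‖ ^ 2 := by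
    rw [← inner_sub_left, ← hΔ, real_inner_self_eq_norm_sq]
  rw [e1, e2] at h2
  rw [e3] at h1
  have hL' : L ≠ 0 := hL.ne'
  have key : ℓ x + ⟪gradient ℓ x, y - x⟫ - (1 / L) * ⟪gradient ℓ x, Δ⟫ ≤
      ℓ y + -(1 / L) * ⟪gradient ℓ y, Δ⟫ + L / 2 * ((1 / L) ^ 2 * ‖Δ‖ ^ 2) := by linarith
  have hc : L / 2 * ((1 / L) ^ 2 * ‖Δ‖ ^ 2) = 1 / (2 * L) * ‖Δ‖ ^ 2 := by
    field_simp
  rw [hc] at key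
  have e5 : 1 / L * ⟪gradient ℓ y, Δ⟫ - 1 / L * ⟪gradient ℓ x, Δ⟫ = 1 / L * ‖Δ‖ ^ 2 := by
    rw [← mul_sub, e4]
  have e6 : 1 / L * ‖Δ‖ ^ 2 = 1 / (2 * L) * ‖Δ‖ ^ 2 + 1 / (2 * L) * ‖Δ‖ ^ 2 := by
    field_simp
    ring
  linarith [key, e5, e6]

lemma cocoercive (ℓ : E → ℝ) (hconv : ConvexOn ℝ Set.univ ℓ) (hdiff : Differentiable ℝ ℓ)
    (L : ℝ) (hL : 0 < L)
    (hLip : ∀ u v, ‖gradient ℓ u - gradient ℓ v‖ ≤ L * ‖u - v‖) (x y : E) :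
    1 / L * ‖gradient ℓ x - gradient ℓ y‖ ^ 2 ≤ ⟪gradient ℓ x - gradient ℓ y, x - y⟫ := by
  have h1 := lowerBound ℓ hconv hdiff L hL hLip x y
  have h2 := lowerBound ℓ hconv hdiff L hL hLip y x
  have hn : ‖gradient ℓ y - gradient ℓ x‖ = ‖gradient ℓ x - gradient ℓ y‖ := by
    rw [← norm_neg]; congr 1; abel
  rw [hn] at h1
  have e1 : ⟪gradient ℓ x, y - x⟫ + ⟪gradient ℓ y, x - y⟫
      = -⟪gradient ℓ x - gradient ℓ y, x - y⟫ := by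
    rw [inner_sub_left]
    have : (y - x : E) = -(x - y) := by abel
    rw [this, inner_neg_right]
    ring
  have hL' : L ≠ 0 := hL.ne'
  have : 1 / (2 * L) * ‖gradient ℓ x - gradient ℓ y‖ ^ 2 +
      1 / (2 * L) * ‖gradient ℓ x - gradient ℓ y‖ ^ 2 = 1 / L * ‖gradient ℓ x - gradient ℓ y‖ ^ 2 := by
    field_simp
    ring
  linarith [h1, h2, e1, this]

lemma rayleigh_low {n : ℕ} (H : Matrix (Fin n) (Fin n) ℝ) (hH : H.IsHermitian)
    (x : EuclideanSpace ℝ (Fin n)) :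
    lambdaMin H hH * ‖x‖ ^ 2 ≤ ⟪x, Matrix.toEuclideanLin H x⟫ := by
  rcases isEmpty_or_nonempty (Fin n) with he | hne
  · have hx : x = 0 := Subsingleton.elim x 0
    subst hx
    simp
  set b := hH.eigenvectorBasis with hb
  set T := Matrix.toEuclideanLin H with hT
  have hsym : LinearMap.IsSymmetric T := Matrix.isHermitian_iff_isSymmetric.1 hH
  have happ : ∀ j, T (b j) = hH.eigenvalues j • b j := by
    intro j
    have := hH.mulVec_eigenvectorBasis j
    ext i
    have h2 := congrFun this i
    simp only [Matrix.toEuclideanLin_apply, hT]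
    simpa using h2
  have hexp : ⟪x, T x⟫ = ∑ j, hH.eigenvalues j * ⟪x, b j⟫ ^ 2 := by
    rw [← b.sum_inner_mul_inner x (T x)]
    congr 1
    funext j
    have : ⟪b j, T x⟫ = ⟪T (b j), x⟫ := (hsym (b j) x).symm
    rw [this, happ j, real_inner_smul_left, real_inner_comm (b j) x]
    ring
  have hnorm : ‖x‖ ^ 2 = ∑ j, ⟪x, b j⟫ ^ 2 := by
    have := b.sum_inner_mul_inner x x
    rw [← real_inner_self_eq_norm_sq]
    rw [← this]
    congr 1
    funext j
    rw [real_inner_comm (b j) x]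
    ring
  rw [hexp, hnorm, Finset.mul_sum]
  apply Finset.sum_le_sum
  intro j _
  have hmin : lambdaMin H hH ≤ hH.eigenvalues j :=
    ciInf_le (Set.Finite.bddBelow (Set.finite_range _)) j
  nlinarith [sq_nonneg (⟪x, b j⟫ : ℝ)]

lemma lambdaMin_nonneg {n : ℕ} (H : Matrix (Fin n) (Fin n) ℝ) (hH : H.PosDef) :
    0 ≤ lambdaMin H hH.1 := by
  rcases isEmpty_or_nonempty (Fin n) with he | hne
  · simp [lambdaMin, iInf, Set.range_eq_empty, Real.sInf_empty]
  · exact le_ciInf fun i => (hH.eigenvalues_pos i).le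

lemma toEuclideanLin_inv_cancel {n : ℕ} (H : Matrix (Fin n) (Fin n) ℝ) (hH : H.PosDef)
    (v : EuclideanSpace ℝ (Fin n)) :
    Matrix.toEuclideanLin H (Matrix.toEuclideanLin H⁻¹ v) = v := by
  have hdet : H.det ≠ 0 := hH.det_pos.ne'
  ext i
  simp only [Matrix.toEuclideanLin_apply]
  simp [Matrix.mulVec_mulVec, Matrix.mul_nonsing_inv H (isUnit_iff_ne_zero.mpr hdet)]

private lemma div_le_div_of_nonneg_right' {a b c : ℝ} (h : a ≤ b) (hc : 0 < c) :
    a / c ≤ b / c := by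
  gcongr

/-- for convex `ℓ` with `L`-Lipschitz gradient, the map
`u ↦ H⁻¹∇ℓ(u)` is `(λ_min(H)/L)`-cocoercive with respect to `⟨·,·⟩_H`. -/
theorem stmt_1 {n : ℕ} (H : Matrix (Fin n) (Fin n) ℝ) (hH : H.PosDef)
    (ℓ : EuclideanSpace ℝ (Fin n) → ℝ)
    (hconv : ConvexOn ℝ Set.univ ℓ) (hdiff : Differentiable ℝ ℓ)
    (L : ℝ) (hL : 0 < L)
    (hLip : ∀ u v, ‖gradient ℓ u - gradient ℓ v‖ ≤ L * ‖u - v‖) :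
    ∀ u₁ u₂,
      hIP H (Matrix.toEuclideanLin H⁻¹ (gradient ℓ u₁) -
              Matrix.toEuclideanLin H⁻¹ (gradient ℓ u₂)) (u₁ - u₂) ≥
        (lambdaMin H hH.1 / L) *
          hNorm H (Matrix.toEuclideanLin H⁻¹ (gradient ℓ u₁) -
                    Matrix.toEuclideanLin H⁻¹ (gradient ℓ u₂)) ^ 2 := by
  intro u₁ u₂
  set Δ := gradient ℓ u₁ - gradient ℓ u₂ with hΔ
  have hw : Matrix.toEuclideanLin H⁻¹ (gradient ℓ u₁) -
      Matrix.toEuclideanLin H⁻¹ (gradient ℓ u₂) = Matrix.toEuclideanLin H⁻¹ Δ :=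
    (map_sub _ _ _).symm
  rw [hw]
  set w := Matrix.toEuclideanLin H⁻¹ Δ with hwdef
  have hsym : LinearMap.IsSymmetric (Matrix.toEuclideanLin H) :=
    Matrix.isHermitian_iff_isSymmetric.1 hH.1
  have hHw : Matrix.toEuclideanLin H w = Δ := toEuclideanLin_inv_cancel H hH Δ
  have hLHS : hIP H w (u₁ - u₂) = ⟪Δ, u₁ - u₂⟫ := by
    unfold hIP
    rw [← hsym w (u₁ - u₂), hHw]
  have ha : hIP H w w = ⟪w, Δ⟫ := by
    unfold hIP
    rw [hHw]
  have hray : lambdaMin H hH.1 * ‖w‖ ^ 2 ≤ hIP H w w := rayleigh_low H hH.1 w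
  have hmin0 : 0 ≤ lambdaMin H hH.1 := lambdaMin_nonneg H hH
  have ha0 : 0 ≤ hIP H w w := le_trans (by positivity) hray
  have hn2 : hNorm H w ^ 2 = hIP H w w := by
    unfold hNorm
    exact Real.sq_sqrt ha0
  rw [hLHS, hn2]
  have hCS : hIP H w w ≤ ‖w‖ * ‖Δ‖ := by
    rw [ha]
    exact real_inner_le_norm w Δ
  have hKey : lambdaMin H hH.1 * hIP H w w ≤ ‖Δ‖ ^ 2 := by
    rcases eq_or_lt_of_le (norm_nonneg w) with h0 | h0
    · have hw0 : w = 0 := norm_eq_zero.1 h0.symm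
      have : hIP H w w = 0 := by rw [ha, hw0, inner_zero_left]
      rw [this, mul_zero]
      positivity
    · have e1 : lambdaMin H hH.1 * ‖w‖ ≤ ‖Δ‖ := by nlinarith
      nlinarith [norm_nonneg Δ, mul_le_mul_of_nonneg_left hCS hmin0]
  have hcoco : 1 / L * ‖Δ‖ ^ 2 ≤ ⟪Δ, u₁ - u₂⟫ := cocoercive ℓ hconv hdiff L hL hLip u₁ u₂
  have hfin : lambdaMin H hH.1 / L * hIP H w w ≤ 1 / L * ‖Δ‖ ^ 2 := by
    rw [div_mul_eq_mul_div, div_mul_eq_mul_div, one_mul]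
    exact div_le_div_of_nonneg_right' hKey hL
  linarith
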